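/- If α is irrational but not a quadratic irrational, then the only real numbers λ with λ·(ℤ + αℤ) = ℤ + αℤ are λ = 1 and λ = −1. -/

import Mathlib

lemma int_lin_indep (α : ℝ) (hα : Irrational α) (p q : ℤ) (h : (p:ℝ) + q*α = 0) :
    p = 0 ∧ q = 0 := by
  by_cases hqz : q = 0
  · subst hqz; simp at h; exact ⟨by exact_mod_cast h, rfl⟩
  · exfalso
    have : α = ((-p / q : ℚ) : ℝ) := by
      push_cast
      field_simp
      linarith
    exact hα ⟨(-p / q : ℚ), this.symm⟩

/-- If `α` is irrational but not a quadratic irrational, the only `λ` with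
`λ·(ℤ + αℤ) = ℤ + αℤ` are `±1`. -/
theorem multipliers_pm_one (α : ℝ) (hα : Irrational α)
    (hq : ¬ ∃ a b c : ℤ, a ≠ 0 ∧ (a : ℝ) * α ^ 2 + (b : ℝ) * α + (c : ℝ) = 0) (l : ℝ)
    (h : (fun x => l * x) '' ((AddSubgroup.closure ({1, α} : Set ℝ) : AddSubgroup ℝ) : Set ℝ)
        = ((AddSubgroup.closure ({1, α} : Set ℝ) : AddSubgroup ℝ) : Set ℝ)) :
    l = 1 ∨ l = -1 := by
  have h1 : (1:ℝ) ∈ AddSubgroup.closure ({1, α} : Set ℝ) :=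
    AddSubgroup.subset_closure (by simp)
  have hαmem : α ∈ AddSubgroup.closure ({1, α} : Set ℝ) :=
    AddSubgroup.subset_closure (by simp)
  -- l * 1 ∈ closure
  have hl : l ∈ AddSubgroup.closure ({1, α} : Set ℝ) := by
    have : l * 1 ∈ (fun x => l * x) '' ((AddSubgroup.closure ({1, α} : Set ℝ) : AddSubgroup ℝ) : Set ℝ) :=
      ⟨1, h1, rfl⟩
    rw [h] at this; simpa using this
  obtain ⟨a, b, hab⟩ := AddSubgroup.mem_closure_pair.mp hl
  -- l * α ∈ closure
  have hlα : l * α ∈ AddSubgroup.closure ({1, α} : Set ℝ) := by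
    have : l * α ∈ (fun x => l * x) '' ((AddSubgroup.closure ({1, α} : Set ℝ) : AddSubgroup ℝ) : Set ℝ) :=
      ⟨α, hαmem, rfl⟩
    rw [h] at this; exact this
  obtain ⟨c, d, hcd⟩ := AddSubgroup.mem_closure_pair.mp hlα
  simp only [zsmul_eq_mul, mul_one] at hab hcd
  -- b α² + (a-d) α - c = 0, so b = 0 since α not quadratic
  have hb0 : b = 0 := by
    by_contra hb
    have h3 : (a:ℝ)*α + (b:ℝ)*α^2 = l*α := by rw [← hab]; ring
    exact hq ⟨b, a - d, -c, hb, by push_cast; linarith [h3, hcd]⟩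
  subst hb0
  simp at hab
  subst hab
  -- surjectivity: α in image
  have : α ∈ (fun x => (a:ℝ) * x) '' ((AddSubgroup.closure ({1, α} : Set ℝ) : AddSubgroup ℝ) : Set ℝ) := by
    rw [h]; exact hαmem
  obtain ⟨x, hx, hax⟩ := this
  obtain ⟨m, n, hmn⟩ := AddSubgroup.mem_closure_pair.mp hx
  simp only [zsmul_eq_mul, mul_one] at hmn
  subst hmn
  -- a*(m + n*α) = α : (a*m) + (a*n - 1)*α = 0
  have key : ((a*m : ℤ) : ℝ) + ((a*n - 1 : ℤ) : ℝ) * α = 0 := by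
    simp only at hax
    push_cast
    nlinarith [hax]
  obtain ⟨h1', h2'⟩ := int_lin_indep α hα _ _ key
  have han : a * n = 1 := by omega
  rcases Int.isUnit_iff.mp (IsUnit.of_mul_eq_one (a := a) n han) with h' | h'
  · left; rw [h']; norm_num
  · right; rw [h']; norm_num
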